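/- Second-order expansion of the exponential-family KL divergence: for μ > 0 and small δ, D(Exp(μ) ‖ Exp(μ+δ)) = log(1 + δ/μ) + μ/(μ+δ) − 1 = δ²/(2μ²) + O(δ³). Hence the ratio of the KL divergence to the optimal Chernoff exponent max_s c(s,δ) = δ²/(8μ²) + O(δ³) tends to 4 as δ → 0. -/
import Mathlib
open Filter Asymptotics Topology

lemma logTaylor2 (x : ℝ) (hx : |x| ≤ 1/2) :
    |Real.log (1+x) - (x - x^2/2)| ≤ 2*|x|^3 := by
  have h1 : |(-x)| < 1 := by rw [abs_neg]; linarith [abs_nonneg x]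
  have h := Real.abs_log_sub_add_sum_range_le h1 2
  simp [Finset.sum_range_succ] at h
  have h2 : |x|^3 / (1 - |x|) ≤ 2*|x|^3 := by
    rw [div_le_iff₀ (by linarith [abs_nonneg x])]
    nlinarith [abs_nonneg x, pow_nonneg (abs_nonneg x) 3]
  calc |Real.log (1+x) - (x - x^2/2)|
      = |-x + x^2/(1+1) + Real.log (1+x)| := by congr 1; ring
    _ ≤ 2*|x|^3 := le_trans h h2

lemma Dbound (μ : ℝ) (hμ : 0 < μ) (D : ℝ → ℝ)
    (hD : ∀ δ : ℝ, D δ = Real.log (1 + δ / μ) + μ / (μ + δ) - 1)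
    (δ : ℝ) (hδ : |δ| ≤ μ/2) : |D δ - δ^2/(2*μ^2)| ≤ (4/μ^3)*|δ|^3 := by
  set x := δ/μ with hxdef
  have hμ0 : μ ≠ 0 := ne_of_gt hμ
  have hxabs : |x| = |δ|/μ := by rw [hxdef, abs_div, abs_of_pos hμ]
  have hx : |x| ≤ 1/2 := by rw [hxabs, div_le_div_iff₀ hμ (by norm_num)]; linarith
  have hx1 : (1:ℝ)/2 ≤ 1 + x := by
    have := abs_le.mp hx; linarith [this.1]
  have hx1' : (1:ℝ) + x ≠ 0 := by linarith
  have hrat : μ / (μ + δ) = 1/(1+x) := by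
    rw [hxdef]; field_simp
  have hA := logTaylor2 x hx
  have hB : |1/(1+x) - (1 - x + x^2)| ≤ 2*|x|^3 := by
    have he : 1/(1+x) - (1 - x + x^2) = -(x^3/(1+x)) := by field_simp; ring
    rw [he, abs_neg, abs_div, abs_of_pos (by linarith : (0:ℝ) < 1 + x)]
    rw [div_le_iff₀ (by linarith : (0:ℝ) < 1 + x)]
    have h3 : |x^3| = |x|^3 := abs_pow x 3
    nlinarith [pow_nonneg (abs_nonneg x) 3]
  have hsplit : D δ - δ^2/(2*μ^2) =
      (Real.log (1+x) - (x - x^2/2)) + (1/(1+x) - (1 - x + x^2)) := by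
    rw [hD δ, hrat, hxdef]; field_simp; ring
  have h4 : (4/μ^3)*|δ|^3 = 4*|x|^3 := by
    rw [hxabs, div_pow]; field_simp
  rw [hsplit, h4]
  calc |(Real.log (1+x) - (x - x^2/2)) + (1/(1+x) - (1 - x + x^2))|
      ≤ |Real.log (1+x) - (x - x^2/2)| + |1/(1+x) - (1 - x + x^2)| := abs_add_le _ _
    _ ≤ 2*|x|^3 + 2*|x|^3 := add_le_add hA hB
    _ = 4*|x|^3 := by ring


lemma Cbound (μ : ℝ) (hμ : 0 < μ) (c : ℝ → ℝ → ℝ)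
    (hc : ∀ s δ : ℝ, c s δ =
      Real.log ((1 - s) * μ + s * (μ + δ)) - (1 - s) * Real.log μ - s * Real.log (μ + δ))
    (Cmax : ℝ → ℝ)
    (hCmax : ∀ δ : ℝ, Cmax δ = sSup ((fun s => c s δ) '' Set.Icc (0:ℝ) 1))
    (δ : ℝ) (hδ : |δ| ≤ μ/2) : |Cmax δ - δ^2/(8*μ^2)| ≤ (4/μ^3)*|δ|^3 := by
  set x := δ/μ with hxdef
  have hμ0 : μ ≠ 0 := ne_of_gt hμ
  have hxabs : |x| = |δ|/μ := by rw [hxdef, abs_div, abs_of_pos hμ]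
  have hx : |x| ≤ 1/2 := by rw [hxabs, div_le_div_iff₀ hμ (by norm_num)]; linarith
  have hx1 : (0:ℝ) < 1 + x := by have := abs_le.mp hx; linarith [this.1]
  have hB := logTaylor2 x hx
  -- rewrite c s δ
  have hcs : ∀ s : ℝ, 0 ≤ s → s ≤ 1 →
      c s δ = Real.log (1 + s*x) - s * Real.log (1+x) := by
    intro s hs0 hs1
    have hsxa : |s*x| ≤ |x| := by
      rw [abs_mul, abs_of_nonneg hs0]
      nlinarith [abs_nonneg x]
    have hsx1 : (0:ℝ) < 1 + s*x := by
      have := abs_le.mp (le_trans hsxa hx); linarith [this.1]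
    have e1 : (1 - s) * μ + s * (μ + δ) = μ * (1 + s*x) := by
      rw [hxdef]; field_simp; ring
    have e2 : μ + δ = μ * (1 + x) := by rw [hxdef]; field_simp
    rw [hc, e1, e2, Real.log_mul hμ0 (ne_of_gt hsx1), Real.log_mul hμ0 (ne_of_gt hx1)]
    ring
  -- upper bound for all s
  have upper : ∀ s : ℝ, 0 ≤ s → s ≤ 1 → c s δ ≤ x^2/8 + 4*|x|^3 := by
    intro s hs0 hs1
    rw [hcs s hs0 hs1]
    have hsxa : |s*x| ≤ |x| := by
      rw [abs_mul, abs_of_nonneg hs0]; nlinarith [abs_nonneg x]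
    have hA := abs_le.mp (logTaylor2 (s*x) (le_trans hsxa hx))
    have hB' := abs_le.mp hB
    have h3 : |s*x|^3 ≤ |x|^3 := pow_le_pow_left₀ (abs_nonneg _) hsxa 3
    have h2 : s * (x - x^2/2 - 2*|x|^3) ≤ s * Real.log (1+x) := by
      apply mul_le_mul_of_nonneg_left _ hs0
      linarith [hB'.1]
    nlinarith [sq_nonneg ((2*s-1)*x), pow_nonneg (abs_nonneg x) 3, hA.2,
      mul_le_mul_of_nonneg_left (le_of_lt (lt_of_lt_of_le (by positivity : (0:ℝ) < 2*|x|^3 + 1) (le_refl _))) hs0]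
  have lower : x^2/8 - 2*|x|^3 ≤ c (1/2) δ := by
    rw [hcs (1/2) (by norm_num) (by norm_num)]
    have hsxa : |(1/2)*x| ≤ |x| := by
      rw [abs_mul]; nlinarith [abs_nonneg x, abs_of_nonneg (by norm_num : (0:ℝ) ≤ 1/2)]
    have hA := abs_le.mp (logTaylor2 ((1/2)*x) (le_trans hsxa hx))
    have hB' := abs_le.mp hB
    have h3 : |(1/2)*x|^3 = |x|^3/8 := by
      rw [abs_mul, abs_of_nonneg (by norm_num : (0:ℝ) ≤ 1/2)]; ring
    nlinarith [hA.1, hB'.2]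
  -- sSup bounds
  have hmem : c (1/2) δ ∈ (fun s => c s δ) '' Set.Icc (0:ℝ) 1 :=
    ⟨1/2, by constructor <;> norm_num, rfl⟩
  have hub : ∀ y ∈ (fun s => c s δ) '' Set.Icc (0:ℝ) 1, y ≤ x^2/8 + 4*|x|^3 := by
    rintro y ⟨s, ⟨hs0, hs1⟩, rfl⟩
    exact upper s hs0 hs1
  have hCub : Cmax δ ≤ x^2/8 + 4*|x|^3 := by
    rw [hCmax]; exact csSup_le ⟨_, hmem⟩ hub
  have hClb : x^2/8 - 2*|x|^3 ≤ Cmax δ := by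
    rw [hCmax]
    exact le_trans lower (le_csSup ⟨_, hub⟩ hmem)
  have hx2 : x^2/8 = δ^2/(8*μ^2) := by rw [hxdef, div_pow]; ring
  have hx3 : (4/μ^3)*|δ|^3 = 4*|x|^3 := by
    rw [hxabs, div_pow]; field_simp
  rw [abs_le, hx3]
  constructor <;> [nlinarith [pow_nonneg (abs_nonneg x) 3]; nlinarith]

/-- Second-order expansion of the exponential-family KL divergence
`D(δ) = D(Exp(μ) ‖ Exp(μ+δ)) = log(1 + δ/μ) + μ/(μ+δ) − 1 = δ²/(2μ²) + O(δ³)`,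
and the optimal Chernoff exponent `max_{s∈[0,1]} c(s,δ) = δ²/(8μ²) + O(δ³)`,
so the ratio `D(δ)/max_s c(s,δ)` tends to `4` as `δ → 0`. -/
theorem kl_vs_chernoff_factor_four (μ : ℝ) (hμ : 0 < μ)
    (D : ℝ → ℝ) (hD : ∀ δ : ℝ, D δ = Real.log (1 + δ / μ) + μ / (μ + δ) - 1)
    (c : ℝ → ℝ → ℝ)
    (hc : ∀ s δ : ℝ, c s δ =
      Real.log ((1 - s) * μ + s * (μ + δ)) - (1 - s) * Real.log μ - s * Real.log (μ + δ))
    (Cmax : ℝ → ℝ)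
    (hCmax : ∀ δ : ℝ, Cmax δ = sSup ((fun s => c s δ) '' Set.Icc (0:ℝ) 1)) :
    ((fun δ => D δ - δ ^ 2 / (2 * μ ^ 2)) =O[𝓝 (0:ℝ)] fun δ => δ ^ 3) ∧
    ((fun δ => Cmax δ - δ ^ 2 / (8 * μ ^ 2)) =O[𝓝 (0:ℝ)] fun δ => δ ^ 3) ∧
    Tendsto (fun δ => D δ / Cmax δ) (𝓝[≠] (0:ℝ)) (𝓝 4) := by
  have hev : ∀ᶠ δ : ℝ in 𝓝 (0:ℝ), |δ| ≤ μ/2 := by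
    have h := eventually_abs_sub_lt (0:ℝ) (show (0:ℝ) < μ/2 by positivity)
    filter_upwards [h] with δ hδ
    simp only [sub_zero] at hδ
    exact le_of_lt hδ
  have O1 : (fun δ => D δ - δ ^ 2 / (2 * μ ^ 2)) =O[𝓝 (0:ℝ)] fun δ : ℝ => δ ^ 3 := by
    rw [isBigO_iff]
    refine ⟨4/μ^3, ?_⟩
    filter_upwards [hev] with δ hδ
    rw [Real.norm_eq_abs, Real.norm_eq_abs, abs_pow]
    exact Dbound μ hμ D hD δ hδ
  have O2 : (fun δ => Cmax δ - δ ^ 2 / (8 * μ ^ 2)) =O[𝓝 (0:ℝ)] fun δ : ℝ => δ ^ 3 := by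
    rw [isBigO_iff]
    refine ⟨4/μ^3, ?_⟩
    filter_upwards [hev] with δ hδ
    rw [Real.norm_eq_abs, Real.norm_eq_abs, abs_pow]
    exact Cbound μ hμ c hc Cmax hCmax δ hδ
  refine ⟨O1, O2, ?_⟩
  have habs : Tendsto (fun δ : ℝ => |δ|) (𝓝 (0:ℝ)) (𝓝 0) := by
    simpa using continuous_abs.tendsto (0:ℝ)
  have hlim : Tendsto (fun δ : ℝ => (4/μ^3)*|δ|) (𝓝[≠] (0:ℝ)) (𝓝 0) := by
    simpa using ((habs.const_mul (4/μ^3)).mono_left nhdsWithin_le_nhds)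
  have key : ∀ (f : ℝ → ℝ) (q : ℝ), (∀ δ : ℝ, |δ| ≤ μ/2 → |f δ - δ^2/q| ≤ (4/μ^3)*|δ|^3) →
      Tendsto (fun δ => f δ / δ^2) (𝓝[≠] (0:ℝ)) (𝓝 (1/q)) := by
    intro f q hf
    rw [← tendsto_sub_nhds_zero_iff]
    apply squeeze_zero_norm' _ hlim
    filter_upwards [eventually_nhdsWithin_of_eventually_nhds hev, self_mem_nhdsWithin]
      with δ hδ hne
    have hne' : δ ≠ 0 := hne
    have hδ2 : (0:ℝ) < δ^2 := by positivity
    have e : f δ/δ^2 - 1/q = (f δ - δ^2/q)/δ^2 := by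
      field_simp
    rw [Real.norm_eq_abs, e, abs_div, abs_of_pos hδ2, div_le_iff₀ hδ2]
    have h3 : |δ|^3 = |δ| * δ^2 := by rw [← sq_abs δ]; ring
    calc |f δ - δ^2/q| ≤ 4/μ^3*|δ|^3 := hf δ hδ
      _ = 4/μ^3*|δ| * δ^2 := by rw [h3]; ring
  have hA := key D (2*μ^2) (fun δ h => by simpa using Dbound μ hμ D hD δ h)
  have hB := key Cmax (8*μ^2) (fun δ h => by simpa using Cbound μ hμ c hc Cmax hCmax δ h)
  have h8 : (1:ℝ)/(8*μ^2) ≠ 0 := by positivity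
  have hdiv := hA.div hB h8
  have hval : (1/(2*μ^2))/(1/(8*μ^2)) = (4:ℝ) := by
    field_simp; ring
  rw [hval] at hdiv
  refine hdiv.congr' ?_
  filter_upwards [self_mem_nhdsWithin] with δ hne
  have hne' : δ ≠ 0 := hne
  simp only [Pi.div_apply]
  rw [div_div_div_comm, div_self (pow_ne_zero 2 hne'), div_one]
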